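/- Set ξ_{i,j}^t := det(A_{i,j}^t) for j = 1,2, let M^t be the 2×2 matrix [[ξ_{N,1}^t, ξ_{N,2}^t],[ξ_{N+1,1}^t, ξ_{N+1,2}^t]], and set 𝓜_m := M^m M^{m−1} ⋯ M^2 M^1. Then M^{t+N} = M^t for all t ≥ 1, and for every t ≥ 1 written as t = nN + s with n ≥ 0 and 1 ≤ s ≤ N: (z_N^{t+1}, z_{N+1}^{t+1})ᵀ = 𝓜_s (𝓜_N)^n (z_N^1, z_{N+1}^1)ᵀ, and z_i^{t+1} = ξ_{i,1}^s z_N^t + ξ_{i,2}^s z_{N+1}^t for every i = 1,…,N+1. -/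

import Mathlib

/-- The boundary conventions: `f_0^{t+1} = f_{N+1}^t` and `f_{N+2}^t = f_1^{t+1}`
(`ext N f i t` is `f_i^t` with these conventions; it is only used at `(0, t+1)` and
`(N+2, t)`). -/
def ext {K : Type*} (N : ℕ) (f : ℕ → ℕ → K) (i t : ℕ) : K :=
  if i = 0 then f (N + 1) (t - 1) else if i = N + 2 then f 1 (t + 1) else f i t

/-- The Laurent polynomials `λ_i^t`: `λ_i^t = (z_i^t + z_{i+2}^t)/z_{i+1}^t` for
`1 ≤ i ≤ N-1` and `λ_N^t = (z_1^t z_N^t + z_2^t z_{N+1}^t + 1)/(z_1^t z_{N+1}^t)`. -/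
def lam {K : Type*} [Field K] (N : ℕ) (z : ℕ → ℕ → K) (i t : ℕ) : K :=
  if i = N then (z 1 t * z N t + z 2 t * z (N + 1) t + 1) / (z 1 t * z (N + 1) t)
  else (z i t + z (i + 2) t) / z (i + 1) t

/-- The matrix `A^t` of the linearized system: `(A^t)_{ii} = 1`, `(A^t)_{i+1,i} = -λ_i^t`
(`1 ≤ i ≤ N`), `(A^t)_{i+2,i} = 1` (`1 ≤ i ≤ N-1`), all other entries `0`
(row/column `p ∈ {1,…,N+1}` is encoded by `p - 1 : Fin (N+1)`). -/
def Amat {K : Type*} [Field K] (N : ℕ) (z : ℕ → ℕ → K) (t : ℕ) :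
    Matrix (Fin (N + 1)) (Fin (N + 1)) K := fun i j =>
  if (i : ℕ) = (j : ℕ) then 1
  else if (i : ℕ) = (j : ℕ) + 1 then -lam N z ((j : ℕ) + 1) t
  else if (i : ℕ) = (j : ℕ) + 2 then 1
  else 0

/-- The vector `b₁ = (-1, 0, …, 0)ᵀ`. -/
def bvec1 {K : Type*} [Field K] (N : ℕ) : Fin (N + 1) → K := fun i =>
  if (i : ℕ) = 0 then -1 else 0

/-- The vector `b₂^t = (λ_N^t, -1, 0, …, 0)ᵀ`. -/
def bvec2 {K : Type*} [Field K] (N : ℕ) (z : ℕ → ℕ → K) (t : ℕ) : Fin (N + 1) → K := fun i =>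
  if (i : ℕ) = 0 then lam N z N t else if (i : ℕ) = 1 then -1 else 0

/-- `ξ_{i,j}^t := det A_{i,j}^t`, the determinant of `A^t` with its `i`-th column
(`1 ≤ i ≤ N+1`) replaced by `b₁` (if `j = 1`) or by `b₂^t` (if `j ≠ 1`). -/
def xiD {K : Type*} [Field K] (N : ℕ) (z : ℕ → ℕ → K) (i j t : ℕ) : K :=
  ((Amat N z t).updateCol ⟨(i - 1) % (N + 1), Nat.mod_lt _ (Nat.succ_pos N)⟩
    (if j = 1 then bvec1 N else bvec2 N z t)).det

/-- The `2 × 2` matrix `M^t = [[ξ_{N,1}^t, ξ_{N,2}^t], [ξ_{N+1,1}^t, ξ_{N+1,2}^t]]`. -/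
def Mmat {K : Type*} [Field K] (N : ℕ) (z : ℕ → ℕ → K) (t : ℕ) : Matrix (Fin 2) (Fin 2) K :=
  !![xiD N z N 1 t, xiD N z N 2 t; xiD N z (N + 1) 1 t, xiD N z (N + 1) 2 t]

/-- `𝓜_m := M^m M^{m-1} ⋯ M^2 M^1` (with `𝓜_0 = 1`). -/
def Mprod {K : Type*} [Field K] (N : ℕ) (z : ℕ → ℕ → K) : ℕ → Matrix (Fin 2) (Fin 2) K
  | 0 => 1
  | m + 1 => Mmat N z (m + 1) * Mprod N z m


section Rec
variable {K : Type*} [Field K] {N : ℕ} {z : ℕ → ℕ → K}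

lemma rec1 (hN : 2 ≤ N)
    (hrec : ∀ t, 1 ≤ t → ∀ i, 1 ≤ i → i ≤ N + 1 →
      z i (t + 1) * z i t = ext N z (i - 1) (t + 1) * ext N z (i + 1) t + 1)
    {t : ℕ} (ht : 1 ≤ t) :
    z 1 (t + 1) * z 1 t = z (N + 1) t * z 2 t + 1 := by
  have h := hrec t ht 1 (by omega) (by omega)
  rw [ext, ext, if_pos rfl, if_neg (by omega : ¬(2:ℕ) = 0),
    if_neg (by omega : ¬(2:ℕ) = N + 2)] at h
  simpa using h

lemma recMid (hN : 2 ≤ N)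
    (hrec : ∀ t, 1 ≤ t → ∀ i, 1 ≤ i → i ≤ N + 1 →
      z i (t + 1) * z i t = ext N z (i - 1) (t + 1) * ext N z (i + 1) t + 1)
    {t : ℕ} (ht : 1 ≤ t) {i : ℕ} (h2 : 2 ≤ i) (hiN : i ≤ N) :
    z i (t + 1) * z i t = z (i - 1) (t + 1) * z (i + 1) t + 1 := by
  have h := hrec t ht i (by omega) (by omega)
  rw [ext, ext, if_neg (by omega : ¬i - 1 = 0), if_neg (by omega : ¬i - 1 = N + 2),
    if_neg (by omega : ¬i + 1 = 0), if_neg (by omega : ¬i + 1 = N + 2)] at h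
  exact h

lemma recTop (hN : 2 ≤ N)
    (hrec : ∀ t, 1 ≤ t → ∀ i, 1 ≤ i → i ≤ N + 1 →
      z i (t + 1) * z i t = ext N z (i - 1) (t + 1) * ext N z (i + 1) t + 1)
    {t : ℕ} (ht : 1 ≤ t) :
    z (N + 1) (t + 1) * z (N + 1) t = z N (t + 1) * z 1 (t + 1) + 1 := by
  have h := hrec t ht (N + 1) (by omega) (by omega)
  rw [ext, ext, if_neg (by omega : ¬(N + 1) - 1 = 0),
    if_neg (by omega : ¬(N + 1) - 1 = N + 2),
    if_neg (by omega : ¬(N + 1) + 1 = 0), if_pos (by omega : N + 1 + 1 = N + 2)] at h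
  simpa using h

end Rec

section Core
variable {K : Type*} [Field K] {N : ℕ} {z : ℕ → ℕ → K}
variable (hN : 2 ≤ N)
variable (hz : ∀ i t, 1 ≤ i → i ≤ N + 1 → 1 ≤ t → z i t ≠ 0)
variable (hrec : ∀ t, 1 ≤ t → ∀ i, 1 ≤ i → i ≤ N + 1 →
    z i (t + 1) * z i t = ext N z (i - 1) (t + 1) * ext N z (i + 1) t + 1)

include hN hz hrec

lemma eqE1 {t : ℕ} (ht : 1 ≤ t) :
    z 1 (t + 1) = z N t * (-1) + z (N + 1) t * lam N z N t := by
  have h1 := rec1 hN hrec ht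
  have hy1 := hz 1 t (by omega) (by omega) ht
  have hyN1 := hz (N + 1) t (by omega) (by omega) ht
  rw [lam, if_pos rfl]
  field_simp
  linear_combination h1

lemma eqE2 {t : ℕ} (ht : 1 ≤ t) :
    z 2 (t + 1) = lam N z 1 t * z 1 (t + 1) - z (N + 1) t := by
  have h1 := rec1 hN hrec ht
  have h2 := recMid hN hrec ht (le_refl 2) hN
  norm_num at h2
  have hy2 := hz 2 t (by omega) (by omega) ht
  rw [lam, if_neg (by omega)]
  field_simp
  linear_combination h2 - h1

lemma eqE3 {t : ℕ} (ht : 1 ≤ t) {i : ℕ} (h2 : 2 ≤ i) (hiN : i ≤ N) :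
    z (i + 1) (t + 1) = lam N z i t * z i (t + 1) - z (i - 1) (t + 1) := by
  rcases eq_or_lt_of_le hiN with hEq | hLt
  · rw [hEq]
    rw [hEq] at hiN h2
    have h1 := rec1 hN hrec ht
    have hA := recMid hN hrec ht h2 hiN
    have hT := recTop hN hrec ht
    have hy1 := hz 1 t (by omega) (by omega) ht
    have hyN1 := hz (N + 1) t (by omega) (by omega) ht
    rw [lam, if_pos rfl]
    field_simp
    linear_combination z 1 t * hT - z 1 t * hA + z N (t + 1) * h1
  · have hA := recMid hN hrec ht h2 hiN
    have hB := recMid hN hrec ht (by omega : 2 ≤ i + 1) (by omega : i + 1 ≤ N)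
    rw [Nat.add_sub_cancel] at hB
    have e : i + 1 + 1 = i + 2 := rfl
    rw [e] at hB
    have hyi1 := hz (i + 1) t (by omega) (by omega) ht
    rw [lam, if_neg (by omega)]
    field_simp
    linear_combination hB - hA

lemma lam_shift_lt {t : ℕ} (ht : 1 ≤ t) {i : ℕ} (h1 : 1 ≤ i) (hiN : i < N) :
    lam N z i (t + 1) = lam N z (i + 1) t := by
  have h := eqE3 hN hz hrec ht (by omega : 2 ≤ i + 1) (by omega : i + 1 ≤ N)
  rw [Nat.add_sub_cancel] at h
  have e : i + 1 + 1 = i + 2 := rfl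
  rw [e] at h
  have hx := hz (i + 1) (t + 1) (by omega) (by omega) (by omega)
  rw [lam, if_neg (by omega), h]
  field_simp
  ring

lemma lam_shift_N {t : ℕ} (ht : 1 ≤ t) :
    lam N z N (t + 1) = lam N z 1 t := by
  have h1 := rec1 hN hrec ht
  have hc := recMid hN hrec ht (le_refl 2) hN
  norm_num at hc
  have hT := recTop hN hrec ht
  have hx1 := hz 1 (t + 1) (by omega) (by omega) (by omega)
  have hxN1 := hz (N + 1) (t + 1) (by omega) (by omega) (by omega)
  have hy2 := hz 2 t (by omega) (by omega) ht
  rw [lam, if_pos rfl, lam, if_neg (by omega),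
    div_eq_div_iff (mul_ne_zero hx1 hxN1) hy2]
  linear_combination -(z 2 t) * hT - z (N + 1) (t + 1) * h1 + z (N + 1) (t + 1) * hc

end Core

section Period
variable {K : Type*} [Field K] {N : ℕ} {z : ℕ → ℕ → K}
variable (hN : 2 ≤ N)
variable (hz : ∀ i t, 1 ≤ i → i ≤ N + 1 → 1 ≤ t → z i t ≠ 0)
variable (hrec : ∀ t, 1 ≤ t → ∀ i, 1 ≤ i → i ≤ N + 1 →
    z i (t + 1) * z i t = ext N z (i - 1) (t + 1) * ext N z (i + 1) t + 1)

include hN hz hrec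

lemma lam_shift {t : ℕ} (ht : 1 ≤ t) {i : ℕ} (h1 : 1 ≤ i) (hiN : i ≤ N) :
    lam N z i (t + 1) = lam N z (i % N + 1) t := by
  rcases eq_or_lt_of_le hiN with hEq | hLt
  · rw [hEq, Nat.mod_self]
    exact lam_shift_N hN hz hrec ht
  · rw [Nat.mod_eq_of_lt hLt]
    exact lam_shift_lt hN hz hrec ht h1 hLt

lemma lam_iter {t : ℕ} (ht : 1 ≤ t) (k : ℕ) {i : ℕ} (h1 : 1 ≤ i) (hiN : i ≤ N) :
    lam N z i (t + k) = lam N z ((i - 1 + k) % N + 1) t := by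
  induction k generalizing i with
  | zero =>
    rw [Nat.add_zero, Nat.add_zero, Nat.mod_eq_of_lt (by omega), Nat.sub_add_cancel h1]
  | succ k ih =>
    have e : t + (k + 1) = (t + k) + 1 := rfl
    rw [e, lam_shift hN hz hrec (by omega) h1 hiN,
      ih (by omega) (by have := Nat.mod_lt i (show 0 < N by omega); omega : i % N + 1 ≤ N)]
    congr 2
    rw [Nat.add_sub_cancel, Nat.mod_add_mod]
    congr 1
    omega

lemma lam_period {t : ℕ} (ht : 1 ≤ t) (n : ℕ) {i : ℕ} (h1 : 1 ≤ i) (hiN : i ≤ N) :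
    lam N z i (t + n * N) = lam N z i t := by
  rw [lam_iter hN hz hrec ht (n * N) h1 hiN, Nat.add_mul_mod_self_right,
    Nat.mod_eq_of_lt (by omega), Nat.sub_add_cancel h1]

lemma Amat_period {t : ℕ} (ht : 1 ≤ t) (n : ℕ) :
    Amat N z (t + n * N) = Amat N z t := by
  funext p q
  simp only [Amat]
  split_ifs with h1 h2
  · rfl
  · rw [lam_period hN hz hrec ht n (by omega) (by omega : (q : ℕ) + 1 ≤ N)]
  · rfl
  · rfl

lemma bvec2_period {t : ℕ} (ht : 1 ≤ t) (n : ℕ) :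
    bvec2 N z (t + n * N) = bvec2 N z t := by
  funext p
  simp only [bvec2]
  rw [lam_period hN hz hrec ht n (by omega) (le_refl N)]

lemma xiD_period {t : ℕ} (ht : 1 ≤ t) (n i j : ℕ) :
    xiD N z i j (t + n * N) = xiD N z i j t := by
  rw [xiD, xiD, Amat_period hN hz hrec ht n, bvec2_period hN hz hrec ht n]

lemma Mmat_period {t : ℕ} (ht : 1 ≤ t) (n : ℕ) :
    Mmat N z (t + n * N) = Mmat N z t := by
  rw [Mmat, Mmat, xiD_period hN hz hrec ht, xiD_period hN hz hrec ht,
    xiD_period hN hz hrec ht, xiD_period hN hz hrec ht]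

end Period

section Cramer
open Matrix
variable {K : Type*} [Field K] {N : ℕ} {z : ℕ → ℕ → K}

lemma Amat_det (t : ℕ) : (Amat N z t).det = 1 := by
  rw [Matrix.det_of_lowerTriangular (Amat N z t) ?_]
  · have : ∀ i : Fin (N + 1), Amat N z t i i = 1 := by
      intro i; simp [Amat]
    simp [this]
  · intro i j hij
    have hlt : (i : ℕ) < (j : ℕ) := hij
    simp only [Amat]
    rw [if_neg (by omega), if_neg (by omega), if_neg (by omega)]

variable (hN : 2 ≤ N)
variable (hz : ∀ i t, 1 ≤ i → i ≤ N + 1 → 1 ≤ t → z i t ≠ 0)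
variable (hrec : ∀ t, 1 ≤ t → ∀ i, 1 ≤ i → i ≤ N + 1 →
    z i (t + 1) * z i t = ext N z (i - 1) (t + 1) * ext N z (i + 1) t + 1)

include hN hz hrec

lemma system_eq {t : ℕ} (ht : 1 ≤ t) :
    Amat N z t *ᵥ (fun j : Fin (N + 1) => z ((j : ℕ) + 1) (t + 1)) =
      z N t • bvec1 N + z (N + 1) t • bvec2 N z t := by
  classical
  funext p
  have hpN : (p : ℕ) < N + 1 := p.isLt
  simp only [Matrix.mulVec, dotProduct, Pi.add_apply, Pi.smul_apply, smul_eq_mul]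
  rcases Nat.lt_or_ge (p : ℕ) 1 with h0 | h1
  · -- row 0
    have hq : (p : ℕ) = 0 := by omega
    rw [Fintype.sum_eq_single p (fun c hc => ?_)]
    · have hc : Amat N z t p p = 1 := by simp [Amat]
      rw [hc, one_mul]
      simp [bvec1, bvec2, hq]
      linear_combination eqE1 hN hz hrec ht
    · have hcp : (c : ℕ) ≠ (p : ℕ) := fun h => hc (Fin.ext h)
      simp only [Amat]
      rw [if_neg (by omega), if_neg (by omega), if_neg (by omega), zero_mul]
  · rcases Nat.lt_or_ge (p : ℕ) 2 with h2 | h2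
    · -- row 1
      have hq : (p : ℕ) = 1 := by omega
      have hN1 : 0 < N + 1 := by omega
      set j0 : Fin (N + 1) := ⟨0, hN1⟩ with hj0
      have hsS : ∑ j, Amat N z t p j * z ((j : ℕ) + 1) (t + 1) =
          ∑ j ∈ ({j0, p} : Finset (Fin (N + 1))), Amat N z t p j * z ((j : ℕ) + 1) (t + 1) := by
        refine (Finset.sum_subset (Finset.subset_univ _) ?_).symm
        intro c _ hc
        simp only [Finset.mem_insert, Finset.mem_singleton, not_or] at hc
        have hc0 : (c : ℕ) ≠ 0 := fun h => hc.1 (Fin.ext (by simpa [hj0] using h))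
        have hcp : (c : ℕ) ≠ (p : ℕ) := fun h => hc.2 (Fin.ext h)
        simp only [Amat]
        rw [if_neg (by omega), if_neg (by omega), if_neg (by omega), zero_mul]
      rw [hsS, Finset.sum_pair (by simp [hj0, Fin.ext_iff]; omega)]
      have hA0 : Amat N z t p j0 = -lam N z 1 t := by
        simp only [Amat, hj0]
        rw [if_neg (by simpa [hq]), if_pos (by simp [hq])]
      have hAp : Amat N z t p p = 1 := by simp [Amat]
      rw [hA0, hAp, one_mul]
      simp only [bvec1, bvec2, hq, hj0]
      norm_num
      linear_combination eqE2 hN hz hrec ht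
    · -- rows 2..N
      have hq2 : 2 ≤ (p : ℕ) := h2
      have hqN : (p : ℕ) ≤ N := by omega
      have ha' : (p : ℕ) - 2 < N + 1 := by omega
      have hb' : (p : ℕ) - 1 < N + 1 := by omega
      have hsS : ∑ j, Amat N z t p j * z ((j : ℕ) + 1) (t + 1) =
          ∑ j ∈ ({⟨(p : ℕ) - 2, ha'⟩, ⟨(p : ℕ) - 1, hb'⟩, p} : Finset (Fin (N + 1))),
            Amat N z t p j * z ((j : ℕ) + 1) (t + 1) := by
        refine (Finset.sum_subset (Finset.subset_univ _) ?_).symm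
        intro c _ hc
        simp only [Finset.mem_insert, Finset.mem_singleton, Fin.ext_iff, Fin.val_mk,
          not_or] at hc
        simp only [Amat]
        rw [if_neg (by omega), if_neg (by omega), if_neg (by omega), zero_mul]
      rw [hsS, Finset.sum_insert (by
          simp only [Finset.mem_insert, Finset.mem_singleton, Fin.ext_iff, Fin.val_mk]
          omega),
        Finset.sum_pair (by
          simp only [ne_eq, Fin.ext_iff, Fin.val_mk]
          omega)]
      have hAa : Amat N z t p (⟨(p : ℕ) - 2, ha'⟩ : Fin (N + 1)) = 1 := by
        simp only [Amat, Fin.val_mk]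
        rw [if_neg (by omega), if_neg (by omega), if_pos (by omega)]
      have hAb : Amat N z t p (⟨(p : ℕ) - 1, hb'⟩ : Fin (N + 1)) = -lam N z (p : ℕ) t := by
        simp only [Amat, Fin.val_mk]
        rw [if_neg (by omega), if_pos (by omega)]
        congr 2
        omega
      have hAp : Amat N z t p p = 1 := by simp [Amat]
      rw [hAa, hAb, hAp, one_mul, one_mul]
      simp only [bvec1, bvec2, Fin.val_mk]
      rw [if_neg (by omega), if_neg (by omega), if_neg (by omega)]
      have ea : (p : ℕ) - 2 + 1 = (p : ℕ) - 1 := by omega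
      rw [ea]
      have h3 := eqE3 hN hz hrec ht (show 2 ≤ (p : ℕ) by omega) hqN
      have eb : (p : ℕ) - 1 + 1 = (p : ℕ) := by omega
      rw [eb]
      linear_combination h3

lemma zstep {t : ℕ} (ht : 1 ≤ t) {i : ℕ} (h1 : 1 ≤ i) (h2 : i ≤ N + 1) :
    z i (t + 1) = xiD N z i 1 t * z N t + xiD N z i 2 t * z (N + 1) t := by
  classical
  set x : Fin (N + 1) → K := fun j => z ((j : ℕ) + 1) (t + 1) with hx
  have hAx := system_eq hN hz hrec ht
  have hdet := Amat_det (N := N) (z := z) t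
  have hcr : Matrix.cramer (Amat N z t) (Amat N z t *ᵥ x) = x := by
    rw [Matrix.cramer_eq_adjugate_mulVec, Matrix.mulVec_mulVec, Matrix.adjugate_mul, hdet,
      one_smul, Matrix.one_mulVec]
  have hxi : x (⟨(i - 1) % (N + 1), Nat.mod_lt _ (Nat.succ_pos N)⟩ : Fin (N + 1)) =
      z i (t + 1) := by
    show z ((i - 1) % (N + 1) + 1) (t + 1) = z i (t + 1)
    rw [Nat.mod_eq_of_lt (by omega)]
    congr 1
    omega
  rw [← hxi, ← hcr, Matrix.cramer_apply, hAx, Matrix.det_updateCol_add,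
    Matrix.det_updateCol_smul, Matrix.det_updateCol_smul, xiD, xiD,
    if_pos rfl, if_neg (by omega)]
  ring

end Cramer

section Final
open Matrix
variable {K : Type*} [Field K] {N : ℕ} {z : ℕ → ℕ → K}
variable (hN : 2 ≤ N)
variable (hz : ∀ i t, 1 ≤ i → i ≤ N + 1 → 1 ≤ t → z i t ≠ 0)
variable (hrec : ∀ t, 1 ≤ t → ∀ i, 1 ≤ i → i ≤ N + 1 →
    z i (t + 1) * z i t = ext N z (i - 1) (t + 1) * ext N z (i + 1) t + 1)

include hN hz hrec

lemma vec_step {t : ℕ} (ht : 1 ≤ t) :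
    Mmat N z t *ᵥ ![z N t, z (N + 1) t] = ![z N (t + 1), z (N + 1) (t + 1)] := by
  have hA := zstep hN hz hrec ht (i := N) (by omega) (by omega)
  have hB := zstep hN hz hrec ht (i := N + 1) (by omega) (by omega)
  funext p
  fin_cases p <;>
    simp [Mmat, Matrix.mulVec, dotProduct, Fin.sum_univ_two, hA, hB]

lemma Mprod_vec (m : ℕ) :
    Mprod N z m *ᵥ ![z N 1, z (N + 1) 1] = ![z N (m + 1), z (N + 1) (m + 1)] := by
  induction m with
  | zero => simp [Mprod]
  | succ m ih =>
    rw [Mprod, ← Matrix.mulVec_mulVec, ih, vec_step hN hz hrec (by omega)]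

lemma Mprod_add_N (m : ℕ) : Mprod N z (m + N) = Mprod N z m * Mprod N z N := by
  induction m with
  | zero => rw [Nat.zero_add]; simp [Mprod]
  | succ m ih =>
    have e : m + 1 + N = (m + N) + 1 := by omega
    rw [e, Mprod, ih]
    have e2 : m + N + 1 = (m + 1) + 1 * N := by omega
    rw [e2, Mmat_period hN hz hrec (by omega) 1, Mprod, mul_assoc]

lemma Mprod_decomp (n s : ℕ) : Mprod N z (n * N + s) = Mprod N z s * Mprod N z N ^ n := by
  induction n with
  | zero => simp
  | succ n ih =>
    have e : (n + 1) * N + s = (n * N + s) + N := by ring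
    rw [e, Mprod_add_N hN hz hrec, ih, pow_succ, mul_assoc]

end Final

theorem stmt16 {K : Type*} [Field K] (N : ℕ) (hN : 2 ≤ N) (z : ℕ → ℕ → K)
    (hz : ∀ i t, 1 ≤ i → i ≤ N + 1 → 1 ≤ t → z i t ≠ 0)
    (hrec : ∀ t, 1 ≤ t → ∀ i, 1 ≤ i → i ≤ N + 1 →
      z i (t + 1) * z i t = ext N z (i - 1) (t + 1) * ext N z (i + 1) t + 1) :
    (∀ t, 1 ≤ t → Mmat N z (t + N) = Mmat N z t) ∧
    (∀ n s : ℕ, 1 ≤ s → s ≤ N →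
      (Mprod N z s * Mprod N z N ^ n).mulVec ![z N 1, z (N + 1) 1] =
        ![z N (n * N + s + 1), z (N + 1) (n * N + s + 1)] ∧
      ∀ i, 1 ≤ i → i ≤ N + 1 →
        z i (n * N + s + 1) =
          xiD N z i 1 s * z N (n * N + s) + xiD N z i 2 s * z (N + 1) (n * N + s)) := by
  constructor
  · intro t ht
    have h := Mmat_period hN hz hrec ht 1
    rwa [one_mul] at h
  · intro n s hs1 hsN
    constructor
    · rw [← Mprod_decomp hN hz hrec]
      exact Mprod_vec hN hz hrec (n * N + s)
    · intro i h1 h2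
      have hts : 1 ≤ n * N + s := by omega
      have h := zstep hN hz hrec hts h1 h2
      rw [h, show n * N + s = s + n * N from by omega,
        xiD_period hN hz hrec hs1 n i 1, xiD_period hN hz hrec hs1 n i 2]
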